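/- (Key inequality in the proof of Lemma 5.) Let G be a connected undirected graph on {1,…,N} with neighbor sets N_i, and let λ = (λ_1,…,λ_N) ∈ (ℝ^M_+)^N. Define φ(λ) = (1/2) Σ_{i=1}^N Σ_{j ∈ N_i} ‖λ_i − λ_j‖_1. Then d_S(λ) ≤ √N · φ(λ), and the inequality is strict whenever λ ∉ S (equivalently, √N φ(λ) = d_S(λ) if and only if λ ∈ S, in which case both sides are 0). -/

import Mathlib

open scoped BigOperators
open Finset

section aux

variable {V : Type*} [Fintype V] [DecidableEq V]

/-- Doubling identity: the sum over ordered neighbor pairs of a symmetric function equals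
twice the sum over edges. -/
lemma aux_sum_neighbors_eq (G : SimpleGraph V) [DecidableRel G.Adj]
    (F : V → V → ℝ) (hF : ∀ i j, F i j = F j i) :
    ∑ i, ∑ j ∈ G.neighborFinset i, F i j
      = 2 * ∑ e ∈ G.edgeFinset, Sym2.lift ⟨F, hF⟩ e := by
  classical
  have hmaps : ∀ p ∈ Finset.univ.filter (fun p : V × V => G.Adj p.1 p.2),
      s(p.1, p.2) ∈ G.edgeFinset := by
    intro p hp
    simp only [Finset.mem_filter] at hp
    simpa [SimpleGraph.mem_edgeFinset] using hp.2
  have hfib := Finset.sum_fiberwise_of_maps_to hmaps (fun p : V × V => F p.1 p.2)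
  have hLHS : ∑ i, ∑ j ∈ G.neighborFinset i, F i j
      = ∑ p ∈ Finset.univ.filter (fun p : V × V => G.Adj p.1 p.2), F p.1 p.2 := by
    rw [Finset.sum_filter, ← Finset.univ_product_univ, Finset.sum_product]
    refine Finset.sum_congr rfl fun i _ => ?_
    rw [SimpleGraph.neighborFinset_eq_filter, Finset.sum_filter]
  rw [hLHS, ← hfib, Finset.mul_sum]
  refine Finset.sum_congr rfl fun e he => ?_
  induction e with
  | _ x y =>
    rw [SimpleGraph.mem_edgeFinset, SimpleGraph.mem_edgeSet] at he
    have hxy : x ≠ y := he.ne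
    have hset : (Finset.univ.filter (fun p : V × V => G.Adj p.1 p.2)).filter
        (fun p => s(p.1, p.2) = s(x, y)) = {(x, y), (y, x)} := by
      ext p
      simp only [Finset.mem_filter, Finset.mem_univ, true_and, Finset.mem_insert,
        Finset.mem_singleton, Sym2.eq_iff]
      constructor
      · rintro ⟨_, (⟨h1, h2⟩ | ⟨h1, h2⟩)⟩
        · left; exact Prod.ext h1 h2
        · right; exact Prod.ext h1 h2
      · rintro (rfl | rfl)
        · exact ⟨he, Or.inl ⟨rfl, rfl⟩⟩
        · exact ⟨he.symm, Or.inr ⟨rfl, rfl⟩⟩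
    rw [hset, Finset.sum_pair (by simp [hxy.symm, Prod.ext_iff])]
    simp only [Sym2.lift_mk]
    rw [hF y x]
    ring

/-- Triangle inequality along a walk. -/
lemma aux_walk_le {G : SimpleGraph V} (F : V → V → ℝ) (hF : ∀ i j, F i j = F j i)
    (h0 : ∀ a, F a a = 0) (htri : ∀ a b c, F a c ≤ F a b + F b c) :
    ∀ {a b : V} (w : G.Walk a b), F a b ≤ (w.edges.map (Sym2.lift ⟨F, hF⟩)).sum := by
  intro a b w
  induction w with
  | nil => simp [h0]
  | @cons a c b hadj p ih =>
    rw [SimpleGraph.Walk.edges_cons, List.map_cons, List.sum_cons, Sym2.lift_mk]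
    calc F a b ≤ F a c + F c b := htri a c b
    _ ≤ F a c + (p.edges.map (Sym2.lift ⟨F, hF⟩)).sum := by linarith [ih]

/-- In a connected graph, a symmetric "distance-like" function between any two vertices is
bounded by the sum over all edges. -/
lemma aux_conn_le (G : SimpleGraph V) [DecidableRel G.Adj] (hG : G.Connected)
    (F : V → V → ℝ) (hF : ∀ i j, F i j = F j i)
    (h0 : ∀ a, F a a = 0) (htri : ∀ a b c, F a c ≤ F a b + F b c)
    (hnn : ∀ i j, 0 ≤ F i j) (a b : V) :
    F a b ≤ ∑ e ∈ G.edgeFinset, Sym2.lift ⟨F, hF⟩ e := by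
  classical
  obtain ⟨w⟩ := hG.preconnected a b
  set p := w.toPath with hp
  have hnodup : p.1.edges.Nodup := p.2.edges_nodup
  have h1 : F a b ≤ (p.1.edges.map (Sym2.lift ⟨F, hF⟩)).sum := aux_walk_le F hF h0 htri p.1
  have h2 : (p.1.edges.map (Sym2.lift ⟨F, hF⟩)).sum
      = ∑ e ∈ p.1.edges.toFinset, Sym2.lift ⟨F, hF⟩ e :=
    (List.sum_toFinset _ hnodup).symm
  have h3 : ∑ e ∈ p.1.edges.toFinset, Sym2.lift ⟨F, hF⟩ e
      ≤ ∑ e ∈ G.edgeFinset, Sym2.lift ⟨F, hF⟩ e := by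
    refine Finset.sum_le_sum_of_subset_of_nonneg ?_ ?_
    · intro e hee
      rw [List.mem_toFinset] at hee
      simpa [SimpleGraph.mem_edgeFinset] using p.1.edges_subset_edgeSet hee
    · intro e _ _
      induction e with
      | _ x y => simpa using hnn x y
  linarith

end aux

/-- (Key inequality in the proof of Lemma 5.) Let `G` be a connected undirected graph on
`{1,…,N}` and `λ = (λ_1,…,λ_N) ∈ (ℝ^M_+)^N`. With `φ(λ) = (1/2) Σ_i Σ_{j ∈ N_i} ‖λ_i − λ_j‖₁`,
one has `d_S(λ) ≤ √N · φ(λ)`, with equality holding exactly when `λ ∈ S` (the consensus set),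
in which case both sides are `0`. -/
theorem stmt_5 (N M : ℕ) (G : SimpleGraph (Fin N)) [DecidableRel G.Adj] (hG : G.Connected)
    (lam : PiLp 2 (fun _ : Fin N => EuclideanSpace ℝ (Fin M)))
    (hlam : ∀ i k, 0 ≤ lam i k)
    (S : Set (PiLp 2 (fun _ : Fin N => EuclideanSpace ℝ (Fin M))))
    (hS : S = {μ | (∀ i k, 0 ≤ μ i k) ∧ ∀ i j, μ i = μ j})
    (φ : ℝ) (hφ : φ = (1 / 2) * ∑ i, ∑ j ∈ G.neighborFinset i, ∑ m, |lam i m - lam j m|) :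
    Metric.infDist lam S ≤ Real.sqrt N * φ ∧
      (Real.sqrt N * φ = Metric.infDist lam S ↔ lam ∈ S) ∧
      (lam ∈ S → φ = 0 ∧ Metric.infDist lam S = 0) := by
  classical
  -- the ℓ¹ distance between components
  set F : Fin N → Fin N → ℝ := fun i j => ∑ m, |lam i m - lam j m| with hF
  have hFsymm : ∀ i j, F i j = F j i := fun i j => by
    simp only [hF]; exact Finset.sum_congr rfl fun m _ => abs_sub_comm _ _
  have hF0 : ∀ a, F a a = 0 := fun a => by simp [hF]
  have hFtri : ∀ a b c, F a c ≤ F a b + F b c := by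
    intro a b c
    simp only [hF, ← Finset.sum_add_distrib]
    refine Finset.sum_le_sum fun m _ => ?_
    have := abs_sub_abs_le_abs_sub (lam a m - lam b m) (lam c m - lam b m)
    calc |lam a m - lam c m| = |(lam a m - lam b m) + (lam b m - lam c m)| := by ring_nf
    _ ≤ |lam a m - lam b m| + |lam b m - lam c m| := abs_add_le _ _
  have hFnn : ∀ i j, 0 ≤ F i j := fun i j =>
    Finset.sum_nonneg fun m _ => abs_nonneg _
  have hNpos : 0 < N := by
    have : Nonempty (Fin N) := hG.nonempty
    exact Fin.pos this.some
  -- φ equals the sum over edges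
  have hφedge : φ = ∑ e ∈ G.edgeFinset, Sym2.lift ⟨F, hFsymm⟩ e := by
    rw [hφ, aux_sum_neighbors_eq G F hFsymm]; ring
  have hφnn : 0 ≤ φ := by
    rw [hφedge]
    refine Finset.sum_nonneg fun e _ => ?_
    induction e with
    | _ x y => simpa using hFnn x y
  -- component-wise bound
  have hFφ : ∀ a b, F a b ≤ φ := fun a b => by
    rw [hφedge]; exact aux_conn_le G hG F hFsymm hF0 hFtri hFnn a b
  -- ℓ² ≤ ℓ¹ on components
  have hdistF : ∀ a b, dist (lam a) (lam b) ≤ F a b := by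
    intro a b
    rw [EuclideanSpace.dist_eq]
    have h1 : ∑ m, dist (lam a m) (lam b m) ^ 2 ≤ (∑ m, |lam a m - lam b m|) ^ 2 := by
      have := Finset.sum_sq_le_sq_sum_of_nonneg
        (f := fun m => |lam a m - lam b m|) (s := Finset.univ)
        (fun m _ => abs_nonneg _)
      simpa [Real.dist_eq] using this
    calc Real.sqrt (∑ m, dist (lam a m) (lam b m) ^ 2)
        ≤ Real.sqrt ((∑ m, |lam a m - lam b m|) ^ 2) := Real.sqrt_le_sqrt h1
      _ = F a b := by rw [Real.sqrt_sq (hFnn a b)]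
  -- the consensus projection candidate
  obtain ⟨i0⟩ : Nonempty (Fin N) := hG.nonempty
  set μ : PiLp 2 (fun _ : Fin N => EuclideanSpace ℝ (Fin M)) := WithLp.toLp 2 (fun _ => lam i0) with hμ
  have hμS : μ ∈ S := by
    rw [hS]
    exact ⟨fun i k => hlam i0 k, fun i j => rfl⟩
  -- bound on dist lam μ
  have hdistμ : dist lam μ ≤ Real.sqrt ((N : ℝ) - 1) * φ := by
    have h2 : (0 : ℝ) < (2 : ENNReal).toReal := by norm_num
    rw [PiLp.dist_eq_sum h2]
    simp only [ENNReal.toReal_ofNat]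
    have hsum : ∑ i, dist (lam i) (μ i) ^ (2 : ℝ) ≤ ((N : ℝ) - 1) * φ ^ 2 := by
      have hterm : ∀ i, dist (lam i) (μ i) ^ (2 : ℝ) = dist (lam i) (lam i0) ^ 2 := by
        intro i
        rw [hμ]
        rw [show ((2 : ℝ)) = ((2 : ℕ) : ℝ) by norm_num, Real.rpow_natCast]
      simp only [hterm]
      have herase : ∑ i, dist (lam i) (lam i0) ^ 2
          = ∑ i ∈ Finset.univ.erase i0, dist (lam i) (lam i0) ^ 2 :=
        (Finset.sum_erase Finset.univ (by simp)).symm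
      rw [herase]
      have hle : ∑ i ∈ Finset.univ.erase i0, dist (lam i) (lam i0) ^ 2
          ≤ ∑ _i ∈ Finset.univ.erase i0, φ ^ 2 := by
        refine Finset.sum_le_sum fun i _ => ?_
        have h1 : dist (lam i) (lam i0) ≤ φ := (hdistF i i0).trans (hFφ i i0)
        exact pow_le_pow_left₀ dist_nonneg h1 2
      have hcard : ((Finset.univ.erase i0).card : ℝ) = (N : ℝ) - 1 := by
        rw [Finset.card_erase_of_mem (Finset.mem_univ i0)]
        simp only [Finset.card_univ, Fintype.card_fin]
        rw [Nat.cast_sub hNpos]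
        simp
      calc ∑ i ∈ Finset.univ.erase i0, dist (lam i) (lam i0) ^ 2
          ≤ ∑ _i ∈ Finset.univ.erase i0, φ ^ 2 := hle
        _ = ((N : ℝ) - 1) * φ ^ 2 := by rw [Finset.sum_const, nsmul_eq_mul, hcard]
    have hnn1 : (0 : ℝ) ≤ ∑ i, dist (lam i) (μ i) ^ (2 : ℝ) := by
      refine Finset.sum_nonneg fun i _ => ?_
      exact Real.rpow_nonneg dist_nonneg _
    calc (∑ i, dist (lam i) (μ i) ^ (2 : ℝ)) ^ ((1 : ℝ) / 2)
        ≤ (((N : ℝ) - 1) * φ ^ 2) ^ ((1 : ℝ) / 2) :=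
          Real.rpow_le_rpow hnn1 hsum (by norm_num)
      _ = Real.sqrt (((N : ℝ) - 1) * φ ^ 2) := (Real.sqrt_eq_rpow _).symm
      _ = Real.sqrt ((N : ℝ) - 1) * Real.sqrt (φ ^ 2) := by
          rw [Real.sqrt_mul (by norm_num [hNpos]; exact_mod_cast hNpos)]
      _ = Real.sqrt ((N : ℝ) - 1) * φ := by rw [Real.sqrt_sq hφnn]
  have hinfle : Metric.infDist lam S ≤ Real.sqrt ((N : ℝ) - 1) * φ :=
    (Metric.infDist_le_dist_of_mem hμS).trans hdistμ
  have hsqrtle : Real.sqrt ((N : ℝ) - 1) ≤ Real.sqrt (N : ℝ) :=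
    Real.sqrt_le_sqrt (by linarith)
  have hmain : Metric.infDist lam S ≤ Real.sqrt N * φ :=
    hinfle.trans (mul_le_mul_of_nonneg_right hsqrtle hφnn)
  -- backward direction
  have hback : lam ∈ S → φ = 0 ∧ Metric.infDist lam S = 0 := by
    intro hmem
    have hconst : ∀ i j, lam i = lam j := by
      rw [hS] at hmem; exact hmem.2
    constructor
    · rw [hφ]
      have : ∀ i, ∑ j ∈ G.neighborFinset i, ∑ m, |lam i m - lam j m| = 0 := by
        intro i
        refine Finset.sum_eq_zero fun j _ => Finset.sum_eq_zero fun m _ => ?_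
        rw [hconst i j]; simp
      simp [this]
    · exact Metric.infDist_zero_of_mem hmem
  refine ⟨hmain, ?_, hback⟩
  constructor
  · -- equality implies membership
    intro heq
    by_contra hnotin
    have hne : ∃ i j, lam i ≠ lam j := by
      by_contra h
      push_neg at h
      exact hnotin (by rw [hS]; exact ⟨hlam, h⟩)
    -- find an adjacent differing pair
    have hadjne : ∃ a b, G.Adj a b ∧ lam a ≠ lam b := by
      by_contra h
      push_neg at h
      have hwalk : ∀ {i j : Fin N} (_ : G.Walk i j), lam i = lam j := by
        intro i j w
        induction w with
        | nil => rfl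
        | cons hadj _ ih => exact (h _ _ hadj).trans ih
      obtain ⟨i, j, hij⟩ := hne
      obtain ⟨w⟩ := hG.preconnected i j
      exact hij (hwalk w)
    obtain ⟨a, b, hab, habne⟩ := hadjne
    -- φ > 0
    have hFab : 0 < F a b := by
      rcases (hFnn a b).lt_or_eq with h | h
      · exact h
      · exfalso
        apply habne
        have hall : ∀ m, |lam a m - lam b m| = 0 := by
          intro m
          have := (Finset.sum_eq_zero_iff_of_nonneg
            (fun m _ => abs_nonneg (lam a m - lam b m))).mp h.symm
          exact this m (Finset.mem_univ m)
        ext m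
        have := hall m
        rw [abs_eq_zero] at this
        linarith
    have hφpos : 0 < φ := by
      rw [hφ]
      have hle1 : F a b ≤ ∑ j ∈ G.neighborFinset b, F b j := by
        rw [hFsymm a b]
        exact Finset.single_le_sum (fun j _ => hFnn b j)
          (by rw [SimpleGraph.mem_neighborFinset]; exact hab.symm)
      have hle2 : ∑ j ∈ G.neighborFinset b, F b j
          ≤ ∑ i, ∑ j ∈ G.neighborFinset i, F i j :=
        Finset.single_le_sum (f := fun i => ∑ j ∈ G.neighborFinset i, F i j)
          (fun i _ => Finset.sum_nonneg fun j _ => hFnn i j) (Finset.mem_univ b)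
      have : F a b ≤ ∑ i, ∑ j ∈ G.neighborFinset i, ∑ m, |lam i m - lam j m| :=
        hle1.trans hle2
      linarith
    -- strictness
    have hN1 : (1 : ℝ) ≤ (N : ℝ) := by exact_mod_cast hNpos
    have hsqrtlt : Real.sqrt ((N : ℝ) - 1) < Real.sqrt (N : ℝ) :=
      Real.sqrt_lt_sqrt (by linarith) (by linarith)
    have : Metric.infDist lam S < Real.sqrt N * φ :=
      hinfle.trans_lt (by exact mul_lt_mul_of_pos_right hsqrtlt hφpos)
    linarith [heq]
  · intro hmem
    obtain ⟨h1, h2⟩ := hback hmem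
    rw [h1, h2, mul_zero]
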